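/- The utility loss of the defense grows monotonically with the amount of added noise: for fixed probability vectors P and T on n classes, the function w ↦ JSD(P, (1 - w)P + w T) is monotone nondecreasing on [0,1]; in particular, for fixed P and T (hence fixed α), JSD(P, P') with P' = (1 - cα)P + cα T is monotone nondecreasing in the hyperparameter c ∈ [0,1]. -/

import Mathlib

/-- `P` is a probability vector on `n` classes. -/
def IsProbVec {n : ℕ} (P : Fin n → ℝ) : Prop :=
  (∀ i, 0 ≤ P i) ∧ ∑ i, P i = 1

/-- Shannon entropy `η(P) = -∑ i, P i * log (P i)`. -/
noncomputable def shannonEntropy {n : ℕ} (P : Fin n → ℝ) : ℝ :=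
  -∑ i, P i * Real.log (P i)

/-- Noise magnitude `α = 1 - η(P) / log n` of the membership-inference defense. -/
noncomputable def noiseMag {n : ℕ} (P : Fin n → ℝ) : ℝ :=
  1 - shannonEntropy P / Real.log n

/-- Jensen-Shannon divergence with `M i = (P i + P' i)/2`
(the convention `0 * log (0 / x) = 0` holds automatically). -/
noncomputable def jsd {n : ℕ} (P P' : Fin n → ℝ) : ℝ :=
  ∑ i, (P i * Real.log (P i / ((P i + P' i) / 2)) +
        P' i * Real.log (P' i / ((P i + P' i) / 2)))

noncomputable def jsdTerm (p q : ℝ) : ℝ :=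
  p * Real.log (p / ((p + q) / 2)) + q * Real.log (q / ((p + q) / 2))

noncomputable def jsdH (p q : ℝ) : ℝ :=
  p * Real.log p + q * Real.log q - 2 * (((p + q) / 2) * Real.log ((p + q) / 2))

lemma jsdTerm_eq_H {p q : ℝ} (hp : 0 < p) (hq : 0 ≤ q) : jsdTerm p q = jsdH p q := by
  have hm : 0 < (p + q) / 2 := by linarith
  rcases eq_or_lt_of_le hq with h | h
  · subst h
    simp only [jsdTerm, jsdH]
    rw [Real.log_div hp.ne' hm.ne']
    simp
    ring
  · simp only [jsdTerm, jsdH]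
    rw [Real.log_div hp.ne' hm.ne', Real.log_div h.ne' hm.ne']
    ring

lemma jsdH_continuous (p : ℝ) : Continuous (fun q => jsdH p q) := by
  simp only [jsdH]
  have h1 : Continuous fun q : ℝ => q * Real.log q := Real.continuous_mul_log
  have h2 : Continuous fun q : ℝ => (p + q) / 2 := by continuity
  exact (continuous_const.add h1).sub (continuous_const.mul (h1.comp h2))

lemma jsdH_hasDerivAt {p q : ℝ} (hp : 0 < p) (hq : 0 < q) :
    HasDerivAt (fun q => jsdH p q) (Real.log q - Real.log ((p + q) / 2)) q := by
  have hm : 0 < (p + q) / 2 := by linarith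
  have h1 : HasDerivAt (fun q : ℝ => q * Real.log q) (Real.log q + 1) q :=
    Real.hasDerivAt_mul_log hq.ne'
  have hin : HasDerivAt (fun q : ℝ => (p + q) / 2) (1 / 2) q := by
    simpa using ((hasDerivAt_id q).const_add p).div_const 2
  have h2 : HasDerivAt (fun q : ℝ => ((p + q) / 2) * Real.log ((p + q) / 2))
      ((Real.log ((p + q) / 2) + 1) * (1 / 2)) q := by
    have := (Real.hasDerivAt_mul_log hm.ne').comp q hin; exact this
  have h3 := (h1.const_add (p * Real.log p)).sub (h2.const_mul 2)
  exact h3.congr_deriv (by ring)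

lemma jsdH_monoOn {p : ℝ} (hp : 0 < p) : MonotoneOn (fun q => jsdH p q) (Set.Ici p) := by
  apply monotoneOn_of_deriv_nonneg (convex_Ici p) (jsdH_continuous p).continuousOn
  · intro x hx
    rw [interior_Ici] at hx
    exact ((jsdH_hasDerivAt hp (hp.trans hx)).differentiableAt).differentiableWithinAt
  · intro x hx
    rw [interior_Ici] at hx
    have hx0 : 0 < x := hp.trans hx
    rw [(jsdH_hasDerivAt hp hx0).deriv]
    have hle : (p + x) / 2 ≤ x := by linarith [le_of_lt (Set.mem_Ioi.mp hx)]
    have hm : (0:ℝ) < (p + x) / 2 := by linarith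
    linarith [Real.log_le_log hm hle]

lemma jsdH_antiOn {p : ℝ} (hp : 0 < p) : AntitoneOn (fun q => jsdH p q) (Set.Icc 0 p) := by
  apply antitoneOn_of_deriv_nonpos (convex_Icc 0 p) (jsdH_continuous p).continuousOn
  · intro x hx
    rw [interior_Icc] at hx
    exact ((jsdH_hasDerivAt hp hx.1).differentiableAt).differentiableWithinAt
  · intro x hx
    rw [interior_Icc] at hx
    rw [(jsdH_hasDerivAt hp hx.1).deriv]
    have hle : x ≤ (p + x) / 2 := by linarith [hx.2]
    linarith [Real.log_le_log hx.1 hle]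

lemma jsdTerm_zero_left {q : ℝ} (hq : 0 ≤ q) : jsdTerm 0 q = q * Real.log 2 := by
  rcases eq_or_lt_of_le hq with h | h
  · simp [jsdTerm, ← h]
  · have hq' : q ≠ 0 := h.ne'
    have h2 : q / (q / 2) = 2 := by field_simp
    simp only [jsdTerm, zero_add, zero_div, Real.log_zero, mul_zero, zero_mul, h2]

lemma jsdTerm_mono {p t : ℝ} (hp : 0 ≤ p) (ht : 0 ≤ t) {w₁ w₂ : ℝ}
    (h0 : 0 ≤ w₁) (h12 : w₁ ≤ w₂) (h21 : w₂ ≤ 1) :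
    jsdTerm p ((1 - w₁) * p + w₁ * t) ≤ jsdTerm p ((1 - w₂) * p + w₂ * t) := by
  have hw1 : w₁ ≤ 1 := h12.trans h21
  have h0' : 0 ≤ w₂ := h0.trans h12
  have hq1 : 0 ≤ (1 - w₁) * p + w₁ * t :=
    add_nonneg (mul_nonneg (by linarith) hp) (mul_nonneg h0 ht)
  have hq2 : 0 ≤ (1 - w₂) * p + w₂ * t :=
    add_nonneg (mul_nonneg (by linarith) hp) (mul_nonneg h0' ht)
  rcases eq_or_lt_of_le hp with hp0 | hp0
  · rw [← hp0]
    rw [jsdTerm_zero_left (by simpa using mul_nonneg h0 ht : (0:ℝ) ≤ (1 - w₁) * 0 + w₁ * t),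
        jsdTerm_zero_left (by simpa using mul_nonneg h0' ht : (0:ℝ) ≤ (1 - w₂) * 0 + w₂ * t)]
    have : (1 - w₁) * 0 + w₁ * t ≤ (1 - w₂) * 0 + w₂ * t := by
      simp only [mul_zero, zero_add]
      exact mul_le_mul_of_nonneg_right h12 ht
    exact mul_le_mul_of_nonneg_right this (Real.log_nonneg (by norm_num))
  · rw [jsdTerm_eq_H hp0 hq1, jsdTerm_eq_H hp0 hq2]
    rcases le_total p t with hpt | hpt
    · have m1 : p ≤ (1 - w₁) * p + w₁ * t := by nlinarith
      have m2 : (1 - w₁) * p + w₁ * t ≤ (1 - w₂) * p + w₂ * t := by nlinarith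
      exact jsdH_monoOn hp0 m1 (m1.trans m2) m2
    · have m1 : (1 - w₁) * p + w₁ * t ≤ p := by nlinarith
      have m2 : (1 - w₂) * p + w₂ * t ≤ (1 - w₁) * p + w₁ * t := by nlinarith
      exact jsdH_antiOn hp0 ⟨hq2, m2.trans m1⟩ ⟨hq1, m1⟩ m2

lemma noiseMag_bounds {n : ℕ} (P : Fin n → ℝ) (hP : IsProbVec P) :
    0 ≤ noiseMag P ∧ noiseMag P ≤ 1 := by
  obtain ⟨hnn, hsum⟩ := hP
  have hn : n ≠ 0 := by
    rintro rfl
    simp at hsum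
  by_cases hlog : Real.log n = 0
  · simp [noiseMag, hlog]
  · have hn2 : 2 ≤ n := by
      rcases Nat.lt_or_ge n 2 with h | h
      · interval_cases n
        · exact absurd rfl hn
        · simp at hlog
      · exact h
    have hlogpos : 0 < Real.log n := Real.log_pos (by exact_mod_cast hn2)
    have hnR : (0:ℝ) < n := by positivity
    -- entropy nonneg
    have hle1 : ∀ i, P i ≤ 1 := by
      intro i
      calc P i ≤ ∑ j, P j := Finset.single_le_sum (fun j _ => hnn j) (Finset.mem_univ i)
      _ = 1 := hsum
    have hent_nonneg : 0 ≤ shannonEntropy P := by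
      have : ∑ i, P i * Real.log (P i) ≤ 0 := by
        apply Finset.sum_nonpos
        intro i _
        rcases eq_or_lt_of_le (hnn i) with h | h
        · rw [← h]; simp
        · exact mul_nonpos_of_nonneg_of_nonpos (hnn i) (Real.log_nonpos (hnn i) (hle1 i))
      simp only [shannonEntropy]
      linarith
    -- entropy ≤ log n
    have hent_le : shannonEntropy P ≤ Real.log n := by
      have key : ∀ i, -(P i * Real.log (P i)) ≤ P i * Real.log n + (1 / n - P i) := by
        intro i
        rcases eq_or_lt_of_le (hnn i) with h | h
        · rw [← h]
          simp
        · have hpn : 0 < P i * n := by positivity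
          have hlog1 : Real.log ((P i * n)⁻¹) ≤ (P i * n)⁻¹ - 1 :=
            Real.log_le_sub_one_of_pos (by positivity)
          rw [Real.log_inv] at hlog1
          have hmul := mul_le_mul_of_nonneg_left hlog1 (hnn i)
          have hinv : P i * ((P i * n)⁻¹ - 1) = 1 / n - P i := by
            field_simp
          rw [hinv] at hmul
          have hsplit : Real.log (P i * n) = Real.log (P i) + Real.log n :=
            Real.log_mul h.ne' (by positivity)
          rw [hsplit] at hmul
          nlinarith
      have hsum2 : ∑ i, -(P i * Real.log (P i)) ≤ ∑ i, (P i * Real.log n + (1 / n - P i)) :=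
        Finset.sum_le_sum fun i _ => key i
      have hrhs : ∑ i, (P i * Real.log n + (1 / n - P i)) = Real.log n := by
        rw [Finset.sum_add_distrib, Finset.sum_sub_distrib, ← Finset.sum_mul, hsum]
        simp [Finset.card_univ]
        field_simp
        norm_num
      rw [hrhs] at hsum2
      simpa [shannonEntropy, Finset.sum_neg_distrib] using hsum2
    constructor
    · simp only [noiseMag, sub_nonneg]
      rw [div_le_one hlogpos]
      exact hent_le
    · simp only [noiseMag]
      have : 0 ≤ shannonEntropy P / Real.log n := div_nonneg hent_nonneg hlogpos.le
      linarith

/-- The utility loss of the defense grows monotonically with the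
amount of added noise: for fixed probability vectors `P` and `T` on `n` classes,
`w ↦ JSD(P, (1 - w)P + w T)` is monotone nondecreasing on `[0,1]`; in
particular, for fixed `P` and `T` (hence fixed `α`), `JSD(P, P')` with
`P' = (1 - cα)P + cα T` is monotone nondecreasing in `c ∈ [0,1]`. -/
theorem jsd_mix_monotone {n : ℕ} (P T : Fin n → ℝ)
    (hP : IsProbVec P) (hT : IsProbVec T) :
    (∀ w₁ w₂ : ℝ, 0 ≤ w₁ → w₁ ≤ w₂ → w₂ ≤ 1 →
      jsd P (fun i => (1 - w₁) * P i + w₁ * T i) ≤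
        jsd P (fun i => (1 - w₂) * P i + w₂ * T i)) ∧
    (∀ c₁ c₂ : ℝ, 0 ≤ c₁ → c₁ ≤ c₂ → c₂ ≤ 1 →
      jsd P (fun i => (1 - c₁ * noiseMag P) * P i + c₁ * noiseMag P * T i) ≤
        jsd P (fun i => (1 - c₂ * noiseMag P) * P i + c₂ * noiseMag P * T i)) := by
  have main : ∀ w₁ w₂ : ℝ, 0 ≤ w₁ → w₁ ≤ w₂ → w₂ ≤ 1 →
      jsd P (fun i => (1 - w₁) * P i + w₁ * T i) ≤
        jsd P (fun i => (1 - w₂) * P i + w₂ * T i) := by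
    intro w₁ w₂ h0 h12 h21
    simp only [jsd]
    exact Finset.sum_le_sum fun i _ => jsdTerm_mono (hP.1 i) (hT.1 i) h0 h12 h21
  refine ⟨main, ?_⟩
  intro c₁ c₂ h0 h12 h21
  obtain ⟨ha0, ha1⟩ := noiseMag_bounds P hP
  exact main (c₁ * noiseMag P) (c₂ * noiseMag P) (mul_nonneg h0 ha0)
    (mul_le_mul_of_nonneg_right h12 ha0)
    (mul_le_one₀ h21 ha0 ha1)
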